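/- Let X be a countably infinite alphabet and let (X, Y) be random variables with Y taking finitely many values, say #(Y) = N. Then the minimum list-decoding error with list size L satisfies P_e^{(L)}(X|Y) ≥ 1 − ∑_{x=1}^{L·N} P_X↓(x). -/

import Mathlib

noncomputable section

def IsPmf {α : Type*} (p : α → ℝ) : Prop := (∀ x, 0 ≤ p x) ∧ ∑' x, p x = 1

def topSum (p : ℕ → ℝ) (k : ℕ) : ℝ :=
  sSup {t : ℝ | ∃ s : Finset ℕ, s.card = k ∧ t = ∑ x ∈ s, p x}

lemma topSum_set_nonempty (p : ℕ → ℝ) (k : ℕ) :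
    {t : ℝ | ∃ s : Finset ℕ, s.card = k ∧ t = ∑ x ∈ s, p x}.Nonempty :=
  ⟨_, Finset.range k, Finset.card_range k, rfl⟩

lemma summable_of_pmf {α : Type*} {p : α → ℝ} (hp : IsPmf p) : Summable p := by
  by_contra h
  have h2 := hp.2
  rw [tsum_eq_zero_of_not_summable h] at h2
  exact one_ne_zero h2.symm

lemma sum_le_one_of_pmf {α : Type*} {p : α → ℝ} (hp : IsPmf p) (s : Finset α) :
    ∑ x ∈ s, p x ≤ 1 :=
  (Summable.sum_le_tsum s (fun x _ => hp.1 x) (summable_of_pmf hp)).trans_eq hp.2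

lemma topSum_bddAbove {p : ℕ → ℝ} (hp : IsPmf p) (k : ℕ) :
    BddAbove {t : ℝ | ∃ s : Finset ℕ, s.card = k ∧ t = ∑ x ∈ s, p x} := by
  refine ⟨1, fun t ht => ?_⟩
  obtain ⟨s, -, rfl⟩ := ht
  exact sum_le_one_of_pmf hp s

lemma le_topSum {p : ℕ → ℝ} (hp : IsPmf p) {k : ℕ} {s : Finset ℕ} (hs : s.card = k) :
    ∑ x ∈ s, p x ≤ topSum p k :=
  le_csSup (topSum_bddAbove hp k) ⟨s, hs, rfl⟩

/-- If the side-information alphabet `Y = β` is finite with `N` elements, the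
minimum list-decoding error with list size `L`, namely
`P_e^{(L)}(X|Y) = 1 − ∑_y P_Y(y) ∑_{x=1}^L P_{X|Y=y}↓(x)`, is at least
`1 − ∑_{x=1}^{L·N} P_X↓(x)`. -/
theorem stmt_19 {β : Type*} [Fintype β] (L : ℕ) (hL : 1 ≤ L)
    (q : β → ℝ) (W : β → ℕ → ℝ) (hq : IsPmf q) (hW : ∀ y, IsPmf (W y)) :
    1 - topSum (fun x => ∑' y, q y * W y x) (L * Fintype.card β) ≤
      1 - ∑' y, q y * topSum (W y) L := by
  have hqsum : ∑ y : β, q y = 1 := by rw [← tsum_fintype (L := SummationFilter.unconditional β)]; exact hq.2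
  set p : ℕ → ℝ := fun x => ∑' y, q y * W y x with hp_def
  have hp_eq : ∀ x, p x = ∑ y : β, q y * W y x := fun x => tsum_fintype _
  have hp : IsPmf p := by
    constructor
    · intro x
      rw [hp_eq]
      exact Finset.sum_nonneg fun y _ => mul_nonneg (hq.1 y) ((hW y).1 x)
    · have : ∑' x, p x = ∑' x, ∑ y : β, q y * W y x := by
        exact tsum_congr hp_eq
      rw [this, Summable.tsum_finsetSum (fun y _ => (summable_of_pmf (hW y)).mul_left (q y))]
      have : ∀ y : β, ∑' x, q y * W y x = q y := by
        intro y
        rw [tsum_mul_left, (hW y).2, mul_one]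
      rw [Finset.sum_congr rfl fun y _ => this y, hqsum]
  rw [tsum_fintype]
  apply sub_le_sub_left
  apply le_of_forall_pos_le_add
  intro ε hε
  have hchoice : ∀ y : β, ∃ s : Finset ℕ, s.card = L ∧
      topSum (W y) L ≤ ∑ x ∈ s, W y x + ε := by
    intro y
    obtain ⟨t, ht, hlt⟩ := exists_lt_of_lt_csSup (topSum_set_nonempty (W y) L)
      (sub_lt_self (topSum (W y) L) hε)
    obtain ⟨s, hs, rfl⟩ := ht
    exact ⟨s, hs, by linarith⟩
  choose s hs1 hs2 using hchoice
  set S : Finset ℕ := Finset.univ.biUnion s with hS_def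
  have hScard : S.card ≤ L * Fintype.card β := by
    calc S.card ≤ ∑ y : β, (s y).card := Finset.card_biUnion_le
    _ = ∑ _y : β, L := by simp [hs1]
    _ = L * Fintype.card β := by simp [mul_comm]
  obtain ⟨S', hSS', hS'card⟩ := Infinite.exists_superset_card_eq S _ hScard
  have key : ∑ y : β, q y * topSum (W y) L ≤ ∑ x ∈ S', p x + ε := by
    calc ∑ y : β, q y * topSum (W y) L
        ≤ ∑ y : β, q y * (∑ x ∈ s y, W y x + ε) := by
          refine Finset.sum_le_sum fun y _ => ?_
          exact mul_le_mul_of_nonneg_left (hs2 y) (hq.1 y)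
      _ = ∑ y : β, q y * ∑ x ∈ s y, W y x + ∑ y : β, q y * ε := by
          rw [← Finset.sum_add_distrib]; simp only [mul_add]
      _ = ∑ y : β, q y * ∑ x ∈ s y, W y x + ε := by
          rw [← Finset.sum_mul, hqsum, one_mul]
      _ ≤ ∑ y : β, q y * ∑ x ∈ S', W y x + ε := by
          refine add_le_add_left (Finset.sum_le_sum fun y _ => ?_) ε
          refine mul_le_mul_of_nonneg_left ?_ (hq.1 y)
          exact Finset.sum_le_sum_of_subset_of_nonneg
              (fun x hx => hSS' (Finset.mem_biUnion.2 ⟨y, Finset.mem_univ y, hx⟩))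
              (fun x _ _ => (hW y).1 x)
      _ = ∑ x ∈ S', p x + ε := by
          congr 1
          simp only [hp_eq, Finset.mul_sum]
          rw [Finset.sum_comm]
  exact key.trans (add_le_add_left (le_topSum hp hS'card) ε)
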